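/- Let A be a pointed commutative monoid and S a multiplicatively closed subset of A with 0 ∉ S. Then there exists a prime ideal 𝔭 of A such that the localization S⁻¹A is isomorphic to the localization A_𝔭 (i.e., the localization at the complement of 𝔭). -/

import Mathlib

/-- An ideal of a pointed commutative monoid: a subset containing `0` and
stable under multiplication by arbitrary elements. -/
def IsMonIdeal {A : Type*} [CommMonoidWithZero A] (I : Set A) : Prop :=
  (0 : A) ∈ I ∧ ∀ a x : A, x ∈ I → a * x ∈ I

/-- A prime ideal: a proper ideal whose complement is multiplicatively closed. -/
def IsPrimeMonIdeal {A : Type*} [CommMonoidWithZero A] (I : Set A) : Prop :=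
  IsMonIdeal I ∧ I ≠ Set.univ ∧ ∀ a b : A, a * b ∈ I → a ∈ I ∨ b ∈ I

/-- The complement of a prime ideal, as a submonoid. -/
def primeMonCompl {A : Type*} [CommMonoidWithZero A] (I : Set A)
    (hI : IsPrimeMonIdeal I) : Submonoid A where
  carrier := Iᶜ
  one_mem' := by
    intro h1
    exact hI.2.1 (Set.eq_univ_of_forall fun a => by
      simpa using hI.1.2 a 1 h1)
  mul_mem' := by
    intro a b ha hb hab
    rcases hI.2.2 a b hab with h | h
    · exact ha h
    · exact hb h

/-- For every multiplicatively closed subset `S` of a pointed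
commutative monoid `A` with `0 ∉ S`, there is a prime ideal `𝔭` of `A` such
that the localization `S⁻¹A` is isomorphic to the localization `A_𝔭`
(the localization at the complement of `𝔭`). -/
theorem exists_prime_localization_eq {A : Type*} [CommMonoidWithZero A]
    (S : Submonoid A) (hS : (0 : A) ∉ S) :
    ∃ (I : Set A) (hI : IsPrimeMonIdeal I),
      Nonempty (Localization S ≃* Localization (primeMonCompl I hI)) := by
  set I : Set A := {a | ∀ b, a * b ∉ S} with hIdef
  have hI : IsPrimeMonIdeal I := by
    refine ⟨⟨fun b hb => hS (by simpa using hb),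
        fun a x hx b hb => hx (a * b) (by
          have : x * (a * b) = a * x * b := by
            simp only [mul_assoc, mul_comm, mul_left_comm]
          rw [this]; exact hb)⟩, ?_, ?_⟩
    · intro h
      have h1 : (1 : A) ∈ I := h ▸ Set.mem_univ 1
      exact h1 1 (by simpa using S.one_mem)
    · intro a b hab
      by_contra h
      push_neg at h
      have hc : ∃ c, a * c ∈ S := by
        have := h.1; simp only [hIdef, Set.mem_setOf_eq, not_forall, not_not] at this
        exact this
      have hd : ∃ d, b * d ∈ S := by
        have := h.2; simp only [hIdef, Set.mem_setOf_eq, not_forall, not_not] at this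
        exact this
      obtain ⟨c, hc⟩ := hc
      obtain ⟨d, hd⟩ := hd
      refine hab (c * d) ?_
      have : a * b * (c * d) = a * c * (b * d) := by
        simp only [mul_assoc, mul_comm, mul_left_comm]
      rw [this]
      exact S.mul_mem hc hd
  have hmem : ∀ a : A, a ∈ primeMonCompl I hI ↔ ∃ b, a * b ∈ S := by
    intro a
    constructor
    · intro ha
      have : ¬ (∀ b, a * b ∉ S) := ha
      push_neg at this
      exact this
    · intro ⟨b, hb⟩ ha
      exact ha b hb
  refine ⟨I, hI, ⟨?_⟩⟩
  have loc : Submonoid.LocalizationMap (primeMonCompl I hI) (Localization S) := by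
    refine { toMulHom := (Localization.monoidOf S).toMulHom, isLocalizationMap := ⟨?_, ?_, ?_⟩ }
    · rintro ⟨y, hy⟩
      obtain ⟨b, hb⟩ := (hmem y).mp hy
      refine IsUnit.of_mul_eq_one (Localization.mk b ⟨y * b, hb⟩) ?_
      show (Localization.monoidOf S) y * Localization.mk b ⟨y * b, hb⟩ = 1
      rw [← Localization.mk_one_eq_monoidOf_mk, Localization.mk_mul, one_mul]
      exact Localization.mk_self ⟨y * b, hb⟩
    · intro z
      obtain ⟨⟨a, s⟩, hz⟩ := (Localization.monoidOf S).surj z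
      exact ⟨⟨a, ⟨s, (hmem s).mpr ⟨1, by simp [s.2]⟩⟩⟩, hz⟩
    · intro x y hxy
      obtain ⟨c, hc⟩ := (Localization.monoidOf S).exists_of_eq (x := x) (y := y) hxy
      exact ⟨⟨c, (hmem c).mpr ⟨1, by simp [c.2]⟩⟩, hc⟩
  exact loc.mulEquivOfLocalizations (Localization.monoidOf (primeMonCompl I hI))
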